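/- Let K ⊂ L be a finite Galois extension of differential fields (each element σ of the Galois group G commutes with the derivations), and let ω be a 1-form over K. Suppose there exists a closed 1-form α over L with dω = α ∧ ω. Then the averaged 1-form α̃ = (1/|G|)·∑_{σ ∈ G} σ(α) has coefficients in K, is closed, and satisfies dω = α̃ ∧ ω. -/

import Mathlib

/-- let `L/K` be a finite Galois extension of differential fields
(of characteristic zero) whose Galois group commutes with the derivations, and
let `ω` be a 1-form over `K`. If some closed 1-form `α` over `L` satisfies
`dω = α ∧ ω`, then the Galois average `α̃ = (1/|G|) ∑_σ σ(α)` has coefficients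
in `K`, is closed, and satisfies `dω = α̃ ∧ ω`. -/
theorem galois_average_cofactor
    (K L : Type*) [Field K] [Field L] [Algebra K L] [CharZero K]
    [FiniteDimensional K L] [IsGalois K L]
    (n : ℕ) (D : Fin n → Derivation ℤ L L)
    (hσD : ∀ (σ : L ≃ₐ[K] L) (i : Fin n) (x : L), σ (D i x) = D i (σ x))
    (ω : Fin n → L)
    (hωK : ∀ i, ω i ∈ (algebraMap K L).range)
    (α : Fin n → L)
    (hdα : ∀ i j, D i (α j) = D j (α i))
    (hdω : ∀ i j, D i (ω j) - D j (ω i) = α i * ω j - α j * ω i) :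
    ∀ αt : Fin n → L,
      (αt = fun i => (Fintype.card (L ≃ₐ[K] L) : L)⁻¹ *
          ∑ σ : L ≃ₐ[K] L, σ (α i)) →
      (∀ i, αt i ∈ (algebraMap K L).range) ∧
      (∀ i j, D i (αt j) = D j (αt i)) ∧
      (∀ i j, D i (ω j) - D j (ω i) = αt i * ω j - αt j * ω i) := by
  intro αt hαt
  subst hαt
  have hLchar : CharZero L := charZero_of_injective_algebraMap (algebraMap K L).injective
  set c : L := (Fintype.card (L ≃ₐ[K] L) : L) with hc
  have hc0 : c ≠ 0 := by
    simp only [hc, ne_eq, Nat.cast_eq_zero]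
    exact Fintype.card_ne_zero
  have hσω : ∀ (σ : L ≃ₐ[K] L) (i : Fin n), σ (ω i) = ω i := by
    intro σ i
    obtain ⟨k, hk⟩ := hωK i
    rw [← hk]; exact σ.commutes k
  have hσc : ∀ (σ : L ≃ₐ[K] L), σ c⁻¹ = c⁻¹ := by
    intro σ
    rw [map_inv₀, hc, map_natCast]
  refine ⟨?_, ?_, ?_⟩
  · -- coefficients in K
    intro i
    have hfix : ∀ τ : L ≃ₐ[K] L,
        τ (c⁻¹ * ∑ σ : L ≃ₐ[K] L, σ (α i)) = c⁻¹ * ∑ σ : L ≃ₐ[K] L, σ (α i) := by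
      intro τ
      rw [map_mul, hσc, map_sum]
      congr 1
      exact Fintype.sum_equiv (Equiv.mulLeft τ) _ _ (fun σ => rfl)
    have hbot : IntermediateField.fixedField (⊤ : Subgroup (L ≃ₐ[K] L)) = ⊥ := by
      rw [← IntermediateField.fixingSubgroup_bot (F := K) (E := L)]
      exact IsGalois.fixedField_fixingSubgroup ⊥
    have hmem : (c⁻¹ * ∑ σ : L ≃ₐ[K] L, σ (α i)) ∈
        IntermediateField.fixedField (⊤ : Subgroup (L ≃ₐ[K] L)) := by
      intro τ
      exact hfix τ
    rw [hbot, IntermediateField.mem_bot] at hmem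
    exact hmem
  · -- closedness
    intro i j
    have h : ∀ k l : Fin n, D k (c⁻¹ * ∑ σ : L ≃ₐ[K] L, σ (α l))
        = c⁻¹ * ∑ σ : L ≃ₐ[K] L, σ (D k (α l)) := by
      intro k l
      have hDc : D k c⁻¹ = 0 := by
        have h0 : D k c = 0 := by rw [hc]; exact (D k).map_natCast _
        rw [Derivation.leibniz_inv, h0]; simp
      rw [Derivation.leibniz, hDc, map_sum]
      simp only [smul_eq_mul, mul_zero, smul_zero, add_zero]
      congr 1
      exact Finset.sum_congr rfl fun σ _ => (hσD σ k (α l)).symm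
    rw [h, h]
    congr 1
    exact Finset.sum_congr rfl fun σ _ => by rw [hdα]
  · -- dω = αt ∧ ω
    intro i j
    have key : ∀ σ : L ≃ₐ[K] L,
        D i (ω j) - D j (ω i) = σ (α i) * ω j - σ (α j) * ω i := by
      intro σ
      have := congrArg σ (hdω i j)
      rwa [map_sub, map_sub, map_mul, map_mul, hσD σ i (ω j), hσD σ j (ω i),
        hσω σ i, hσω σ j] at this
    have hsum : c * (D i (ω j) - D j (ω i)) =
        (∑ σ : L ≃ₐ[K] L, σ (α i)) * ω j - (∑ σ : L ≃ₐ[K] L, σ (α j)) * ω i := by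
      rw [Finset.sum_mul, Finset.sum_mul, ← Finset.sum_sub_distrib]
      rw [hc, ← Finset.card_univ, ← nsmul_eq_mul, ← Finset.sum_const]
      exact Finset.sum_congr rfl (fun σ _ => key σ)
    field_simp
    linear_combination hsum
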